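/- Let μ be a Borel probability measure on ℝ with cdf F, finite first moment, and finite negative-tail second moment, such that μ((−∞,0)) > 0 and ∫ x dμ(x) = 0. Define G(y) = ∫_{(-∞, y]} (x² − yx) dμ(x) for y ≥ 0. Then G is nondecreasing on [0, ∞), G(0) = ∫ x²·1_{x≤0} dμ(x) > 0, and consequently G(y) ≥ G(0) > 0 for all y ≥ 0; in particular G has no zero on [0, ∞). -/

import Mathlib

open MeasureTheory Set

lemma int2_aux (μ : Measure ℝ) [IsProbabilityMeasure μ]
    (hmom2 : IntegrableOn (fun x : ℝ => x ^ 2) (Set.Iic 0) μ)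
    {y : ℝ} (hy : 0 ≤ y) : IntegrableOn (fun x : ℝ => x ^ 2) (Set.Iic y) μ := by
  rw [← Set.Iic_union_Ioc_eq_Iic hy]
  exact hmom2.union (((continuous_pow 2).integrableOn_Icc).mono_set Set.Ioc_subset_Icc_self)

theorem G_positive_no_zero_of_zero_mean (μ : Measure ℝ) [IsProbabilityMeasure μ]
    (hmom1 : Integrable (fun x : ℝ => x) μ)
    (hmom2 : IntegrableOn (fun x : ℝ => x ^ 2) (Set.Iic 0) μ)
    (hneg : 0 < μ (Set.Iio 0))
    (hmean : ∫ x, x ∂μ = 0)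
    (G : ℝ → ℝ)
    (hG : ∀ y, G y = ∫ x in Set.Iic y, (x ^ 2 - y * x) ∂μ) :
    MonotoneOn G (Set.Ici 0)
    ∧ G 0 = ∫ x in Set.Iic 0, x ^ 2 ∂μ
    ∧ 0 < G 0
    ∧ (∀ y, 0 ≤ y → G 0 ≤ G y)
    ∧ (∀ y, 0 ≤ y → G y ≠ 0) := by
  -- split formula
  have hIic : ∀ y : ℝ, ∫ x in Set.Iic y, x ∂μ = - ∫ x in Set.Ioi y, x ∂μ := by
    intro y
    have := integral_add_compl (measurableSet_Iic (a := y)) hmom1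
    rw [Set.compl_Iic, hmean] at this
    linarith
  have hsplit : ∀ y : ℝ, 0 ≤ y →
      G y = (∫ x in Set.Iic y, x ^ 2 ∂μ) + y * ∫ x in Set.Ioi y, x ∂μ := by
    intro y hy
    rw [hG y, integral_sub (int2_aux μ hmom2 hy) ((hmom1.const_mul y).integrableOn),
      integral_const_mul, hIic y]
    ring
  have hmono : MonotoneOn G (Set.Ici 0) := by
    intro a ha b hb hab
    simp only [Set.mem_Ici] at ha hb
    have h2a := int2_aux μ hmom2 ha
    have h2ab : IntegrableOn (fun x : ℝ => x ^ 2) (Set.Ioc a b) μ :=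
      (int2_aux μ hmom2 hb).mono_set (fun x hx => hx.2)
    have hsq : (∫ x in Set.Iic b, x ^ 2 ∂μ)
        = (∫ x in Set.Iic a, x ^ 2 ∂μ) + ∫ x in Set.Ioc a b, x ^ 2 ∂μ := by
      rw [← setIntegral_union (Set.Iic_disjoint_Ioc le_rfl) measurableSet_Ioc h2a h2ab,
        Set.Iic_union_Ioc_eq_Iic hab]
    have hlin : (∫ x in Set.Ioi a, x ∂μ)
        = (∫ x in Set.Ioc a b, x ∂μ) + ∫ x in Set.Ioi b, x ∂μ := by
      rw [← setIntegral_union (Set.Ioc_disjoint_Ioi le_rfl) measurableSet_Ioi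
        hmom1.integrableOn hmom1.integrableOn, Set.Ioc_union_Ioi_eq_Ioi hab]
    have key1 : 0 ≤ ∫ x in Set.Ioc a b, (x ^ 2 - a * x) ∂μ := by
      apply setIntegral_nonneg measurableSet_Ioc
      intro x hx
      nlinarith [hx.1, hx.2, ha]
    have key1' : (∫ x in Set.Ioc a b, (x ^ 2 - a * x) ∂μ)
        = (∫ x in Set.Ioc a b, x ^ 2 ∂μ) - a * ∫ x in Set.Ioc a b, x ∂μ := by
      rw [integral_sub h2ab ((hmom1.const_mul a).integrableOn), integral_const_mul]
    have key2 : 0 ≤ ∫ x in Set.Ioi b, x ∂μ := by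
      apply setIntegral_nonneg measurableSet_Ioi
      intro x hx
      exact le_of_lt (lt_of_le_of_lt hb hx)
    rw [hsplit a ha, hsplit b hb, hsq, hlin]
    nlinarith [key1, key2, key1', sub_nonneg.mpr hab]
  have hG0 : G 0 = ∫ x in Set.Iic 0, x ^ 2 ∂μ := by
    simp [hG 0]
  have hpos : 0 < G 0 := by
    rw [hG0]
    have hlt : 0 < ∫ x in Set.Iio 0, x ^ 2 ∂μ := by
      rw [setIntegral_pos_iff_support_of_nonneg_ae
        (Filter.Eventually.of_forall (fun x => sq_nonneg x))
        (hmom2.mono_set Set.Iio_subset_Iic_self)]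
      have : Function.support (fun x : ℝ => x ^ 2) ∩ Set.Iio 0 = Set.Iio 0 := by
        ext x; simp [Function.support]
        intro hx; exact hx.ne
      rw [this]; exact hneg
    calc (0:ℝ) < ∫ x in Set.Iio 0, x ^ 2 ∂μ := hlt
      _ ≤ ∫ x in Set.Iic 0, x ^ 2 ∂μ := by
        apply setIntegral_mono_set hmom2
          (Filter.Eventually.of_forall (fun x => sq_nonneg x))
        exact Filter.Eventually.of_forall (fun x (hx : x ∈ Set.Iio (0:ℝ)) => (Set.Iio_subset_Iic_self hx : x ∈ Set.Iic (0:ℝ)))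
  refine ⟨hmono, hG0, hpos, fun y hy => hmono (le_refl (0:ℝ)) hy hy, fun y hy => ?_⟩
  have := hmono (le_refl (0:ℝ)) hy hy
  linarith
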